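/- arXiv:2011.12347 — 2 statements merged into one kernel-verified Lean document; each statement's English description precedes it below -/
import Mathlib

section
/- Let X be a topological space, Y a real Hilbert space with inner product ⟨·,·⟩, T ⊆ Y a convex set dense in Y, and I : X → ℝ, φ : X → Y two functions such that, for each y ∈ T, the function x ↦ I(x) + ⟨φ(x), y⟩ is lower semicontinuous and inf-compact. Assume there exists a point x₀ ∈ X with φ(x₀) ≠ 0 such that x₀ is a global minimum of both the function I and the function x ↦ ‖φ(x)‖, and inf_{x ∈ X} ⟨φ(x), φ(x₀)⟩ < ‖φ(x₀)‖². Then there exists r > 0 such that the strict minimax inequality sup_{y ∈ B_r} inf_{x ∈ X} (I(x) + ⟨φ(x), y⟩) < inf_{x ∈ X} sup_{y ∈ B_r} (I(x) + ⟨φ(x), y⟩) holds, where B_r = {y ∈ Y : ‖y‖ ≤ r} is the closed ball in Y centered at 0 of radius r. -/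
open scoped RealInnerProductSpace

set_option maxHeartbeats 1000000 in
/-- Under the hypotheses of Theorem 2.1, there is `r > 0` for which the strict minimax
inequality `sup_{y ∈ B_r} inf_{x ∈ X} (I x + ⟨φ x, y⟩) < inf_{x ∈ X} sup_{y ∈ B_r} (I x + ⟨φ x, y⟩)`
holds, where `B_r` is the closed ball of radius `r` centered at `0` in `Y`. -/
theorem ricceri_strict_minimax {X : Type*} [TopologicalSpace X] {Y : Type*}
    [NormedAddCommGroup Y] [InnerProductSpace ℝ Y] [CompleteSpace Y]
    (T : Set Y) (hTconv : Convex ℝ T) (hTdense : Dense T)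
    (I : X → ℝ) (φ : X → Y)
    (hlsc : ∀ y ∈ T, LowerSemicontinuous (fun x : X => I x + ⟪φ x, y⟫))
    (hinfcpt : ∀ y ∈ T, ∀ r : ℝ, IsCompact {x : X | I x + ⟪φ x, y⟫ ≤ r})
    (x₀ : X) (hφx₀ : φ x₀ ≠ 0)
    (hImin : ∀ x : X, I x₀ ≤ I x)
    (hnormmin : ∀ x : X, ‖φ x₀‖ ≤ ‖φ x‖)
    (hb : ∃ x : X, ⟪φ x, φ x₀⟫ < ‖φ x₀‖ ^ 2) :
    ∃ r : ℝ, 0 < r ∧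
      (⨆ y : Metric.closedBall (0 : Y) r, ⨅ x : X, ((I x + ⟪φ x, (y : Y)⟫ : ℝ) : EReal)) <
        ⨅ x : X, ⨆ y : Metric.closedBall (0 : Y) r, ((I x + ⟪φ x, (y : Y)⟫ : ℝ) : EReal) := by
  classical
  obtain ⟨x₁, hx₁⟩ := hb
  obtain ⟨a, ha_def⟩ : ∃ a : ℝ, a = ‖φ x₀‖ := ⟨_, rfl⟩
  have ha : 0 < a := ha_def ▸ norm_pos_iff.2 hφx₀
  obtain ⟨ε, hε_def⟩ : ∃ ε : ℝ, ε = a ^ 2 - ⟪φ x₁, φ x₀⟫ := ⟨_, rfl⟩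
  have hε : 0 < ε := by
    rw [hε_def, ha_def]; linarith only [hx₁]
  obtain ⟨M, hM_def⟩ : ∃ M : ℝ, M = max 0 (I x₁ - I x₀) := ⟨_, rfl⟩
  have hM : 0 ≤ M := hM_def ▸ le_max_left _ _
  have hM' : I x₁ - I x₀ ≤ M := hM_def ▸ le_max_right _ _
  obtain ⟨r, hr_def⟩ : ∃ r : ℝ, r = 1 + a * M / ε := ⟨_, rfl⟩
  have hr : 0 < r := by
    have h1 : 0 ≤ a * M / ε := div_nonneg (mul_nonneg ha.le hM) hε.le
    rw [hr_def]; linarith only [h1]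
  have hrkey : I x₁ - I x₀ < r * ε / a := by
    have h1 : r * ε / a = ε / a + M := by
      rw [hr_def]; field_simp
    have h3 : 0 < ε / a := div_pos hε ha
    linarith only [h1, h3, hM']
  obtain ⟨c, hc_def⟩ : ∃ c : ℝ, c = I x₀ + r * a := ⟨_, rfl⟩
  obtain ⟨κ, hκ_def⟩ : ∃ κ : ℝ, κ = I x₀ - I x₁ + r * ε / a := ⟨_, rfl⟩
  have hκ : 0 < κ := by rw [hκ_def]; linarith only [hrkey]
  obtain ⟨N, hN_def⟩ : ∃ N : ℝ, N = ‖φ x₁‖ := ⟨_, rfl⟩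
  have hN : 0 ≤ N := hN_def ▸ norm_nonneg _
  obtain ⟨B, hB_def⟩ : ∃ B : ℝ, B = |a ^ 2 - ε| / a ^ 2 := ⟨_, rfl⟩
  have hB : 0 ≤ B := hB_def ▸ div_nonneg (abs_nonneg _) (by positivity)
  obtain ⟨η, hη_def⟩ : ∃ η : ℝ, η = κ / (2 * (N + 1)) := ⟨_, rfl⟩
  have hη : 0 < η := hη_def ▸ div_pos hκ (by linarith only [hN])
  obtain ⟨δ, hδ_def⟩ : ∃ δ : ℝ,
      δ = min (a * η ^ 2 / (2 * r)) (min (κ / (4 * (B + 1))) (r * a)) := ⟨_, rfl⟩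
  have hδ : 0 < δ := hδ_def ▸
    lt_min (div_pos (mul_pos ha (pow_pos hη 2)) (by linarith only [hr]))
      (lt_min (div_pos hκ (by linarith only [hB])) (mul_pos hr ha))
  have hδ1 : δ ≤ a * η ^ 2 / (2 * r) := hδ_def ▸ min_le_left _ _
  have hδ2 : δ ≤ κ / (4 * (B + 1)) := hδ_def ▸ le_trans (min_le_right _ _) (min_le_left _ _)
  have hδra : δ ≤ r * a := hδ_def ▸ le_trans (min_le_right _ _) (min_le_right _ _)
  obtain ⟨μ, hμ_def⟩ : ∃ μ : ℝ, μ = min δ (κ / 4) := ⟨_, rfl⟩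
  have hμ : 0 < μ := hμ_def ▸ lt_min hδ (by linarith only [hκ])
  have hμδ : μ ≤ δ := hμ_def ▸ min_le_left _ _
  have hμκ : μ ≤ κ / 4 := hμ_def ▸ min_le_right _ _
  have ha2 : (a : ℝ) ^ 2 ≠ 0 := by positivity
  have key : ∀ y : Y, ‖y‖ ≤ r →
      I x₀ + ⟪φ x₀, y⟫ ≤ c - μ ∨ I x₁ + ⟪φ x₁, y⟫ ≤ c - μ := by
    intro y hy
    obtain ⟨t, ht_def⟩ : ∃ t : ℝ, t = ⟪φ x₀, y⟫ := ⟨_, rfl⟩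
    by_cases hcase : t ≤ r * a - δ
    · left
      rw [hc_def, ← ht_def]
      linarith only [hcase, hμδ]
    · right
      push_neg at hcase
      have htpos : 0 ≤ t := by linarith only [hcase, hδra]
      have htub : t ≤ r * a := by
        have h1 : ⟪φ x₀, y⟫ ≤ ‖φ x₀‖ * ‖y‖ := real_inner_le_norm _ _
        have h2 : a * ‖y‖ ≤ a * r := mul_le_mul_of_nonneg_left hy ha.le
        rw [← ha_def, ← ht_def] at h1
        linarith only [h1, h2]
      obtain ⟨p, hp_def⟩ : ∃ p : Y, p = (t / a ^ 2) • φ x₀ := ⟨_, rfl⟩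
      obtain ⟨w, hw_def⟩ : ∃ w : Y, w = y - p := ⟨_, rfl⟩
      have hinner00 : ⟪φ x₀, φ x₀⟫ = a ^ 2 := by
        rw [ha_def]; exact real_inner_self_eq_norm_sq _
      have hpw : ⟪p, w⟫ = 0 := by
        rw [hp_def, hw_def, real_inner_smul_left, inner_sub_right, hp_def,
          real_inner_smul_right, hinner00, ← ht_def]
        field_simp; ring
      have hyp : y = p + w := by rw [hw_def]; abel
      have hnorm_y : ‖y‖ ^ 2 = ‖p‖ ^ 2 + ‖w‖ ^ 2 := by
        rw [hyp, norm_add_sq_real, hpw]; ring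
      have hnp : ‖p‖ ^ 2 = t ^ 2 / a ^ 2 := by
        rw [hp_def, norm_smul, mul_pow, ← ha_def, Real.norm_eq_abs, sq_abs]
        field_simp
      have hw2 : ‖w‖ ^ 2 ≤ η ^ 2 := by
        have h1 : ‖w‖ ^ 2 = ‖y‖ ^ 2 - t ^ 2 / a ^ 2 := by
          rw [hnorm_y, hnp]; ring
        have ht2 : (r * a - δ) ^ 2 ≤ t ^ 2 :=
          pow_le_pow_left₀ (by linarith only [hcase, hδra]) hcase.le 2
        have hy2 : ‖y‖ ^ 2 ≤ r ^ 2 := pow_le_pow_left₀ (norm_nonneg y) hy 2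
        have h3 : a ^ 2 * ‖w‖ ^ 2 = a ^ 2 * ‖y‖ ^ 2 - t ^ 2 := by
          rw [h1]; field_simp
        have h4 : a ^ 2 * ‖y‖ ^ 2 ≤ a ^ 2 * r ^ 2 :=
          mul_le_mul_of_nonneg_left hy2 (by positivity)
        have h2 : a ^ 2 * ‖w‖ ^ 2 ≤ 2 * r * a * δ := by
          linarith only [h3, h4, ht2, sq_nonneg δ]
        have h5 : 2 * r * a * δ ≤ 2 * r * a * (a * η ^ 2 / (2 * r)) :=
          mul_le_mul_of_nonneg_left hδ1 (by positivity)
        have h6 : 2 * r * a * (a * η ^ 2 / (2 * r)) = a ^ 2 * η ^ 2 := by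
          field_simp
        have h7 : a ^ 2 * ‖w‖ ^ 2 ≤ a ^ 2 * η ^ 2 := by
          linarith only [h2, h5, h6]
        exact le_of_mul_le_mul_left h7 (by positivity : (0:ℝ) < a ^ 2)
      have hwle : ‖w‖ ≤ η := by
        have h1 := Real.sqrt_le_sqrt hw2
        rwa [Real.sqrt_sq (norm_nonneg w), Real.sqrt_sq hη.le] at h1
      have hinner1y : ⟪φ x₁, y⟫ = t / a ^ 2 * (a ^ 2 - ε) + ⟪φ x₁, w⟫ := by
        have h10 : ⟪φ x₁, φ x₀⟫ = a ^ 2 - ε := by rw [hε_def]; ring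
        rw [hyp, inner_add_right, hp_def, real_inner_smul_right, h10]
      have hpart1 : t / a ^ 2 * (a ^ 2 - ε) ≤ r * a - r * ε / a + δ * B := by
        have hBa : B * a ^ 2 = |a ^ 2 - ε| := by
          rw [hB_def]; field_simp
        have hrea : (r * a - r * ε / a) * a ^ 2 = r * a * (a ^ 2 - ε) := by
          field_simp
        rw [div_mul_eq_mul_div, div_le_iff₀ (by positivity : (0:ℝ) < a ^ 2)]
        rcases abs_cases (a ^ 2 - ε) with ⟨h, h'⟩ | ⟨h, h'⟩
        · have h6 : t * (a ^ 2 - ε) ≤ r * a * (a ^ 2 - ε) :=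
            mul_le_mul_of_nonneg_right htub h'
          have h7 : 0 ≤ δ * (B * a ^ 2) :=
            mul_nonneg hδ.le (mul_nonneg hB (sq_nonneg a))
          linarith only [h6, hrea, h7]
        · have h6 : t * (a ^ 2 - ε) ≤ (r * a - δ) * (a ^ 2 - ε) :=
            mul_le_mul_of_nonpos_right hcase.le h'.le
          have h7 : δ * (B * a ^ 2) = δ * (-(a ^ 2 - ε)) := by
            rw [hBa, h]
          linarith only [h6, hrea, h7]
      have hpart2 : ⟪φ x₁, w⟫ ≤ N * η := by
        have h1 : ⟪φ x₁, w⟫ ≤ ‖φ x₁‖ * ‖w‖ := real_inner_le_norm _ _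
        rw [← hN_def] at h1
        have h2 : N * ‖w‖ ≤ N * η := mul_le_mul_of_nonneg_left hwle hN
        linarith only [h1, h2]
      have hNη : N * η ≤ κ / 2 := by
        have hηval : η * (2 * (N + 1)) = κ := by
          rw [hη_def]; field_simp
        linarith only [hηval, hη]
      have hδB : δ * B ≤ κ / 4 := by
        have h4 : (0:ℝ) < 4 * (B + 1) := by linarith only [hB]
        have hδ2' : δ * (4 * (B + 1)) ≤ κ := by
          calc δ * (4 * (B + 1)) ≤ κ / (4 * (B + 1)) * (4 * (B + 1)) :=
                mul_le_mul_of_nonneg_right hδ2 h4.le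
            _ = κ := div_mul_cancel₀ _ h4.ne'
        linarith only [hδ2', hδ]
      have hck : c - κ = I x₁ + r * a - r * ε / a := by
        rw [hc_def, hκ_def]; ring
      rw [hinner1y]
      linarith only [hpart1, hpart2, hNη, hδB, hck, hμκ]
  refine ⟨r, hr, lt_of_le_of_lt (α := EReal) (b := ((c - μ : ℝ) : EReal)) ?_
    (lt_of_lt_of_le (EReal.coe_lt_coe_iff.2 (show c - μ < c by linarith only [hμ])) ?_)⟩
  · apply iSup_le
    rintro ⟨y, hy⟩
    rw [Metric.mem_closedBall, dist_zero_right] at hy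
    rcases key y hy with h | h
    · exact le_trans (iInf_le _ x₀) (by exact_mod_cast h)
    · exact le_trans (iInf_le _ x₁) (by exact_mod_cast h)
  · apply le_iInf
    intro x
    have hnx : 0 < ‖φ x‖ := lt_of_lt_of_le ha (ha_def ▸ hnormmin x)
    obtain ⟨yx, hyx_def⟩ : ∃ yx : Y, yx = (r / ‖φ x‖) • φ x := ⟨_, rfl⟩
    have hmem : yx ∈ Metric.closedBall (0 : Y) r := by
      rw [Metric.mem_closedBall, dist_zero_right, hyx_def, norm_smul,
        Real.norm_eq_abs, abs_of_nonneg (div_nonneg hr.le hnx.le),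
        div_mul_cancel₀ _ hnx.ne']
    have hval : (c : EReal) ≤ ((I x + ⟪φ x, yx⟫ : ℝ) : EReal) := by
      have h1 : ⟪φ x, yx⟫ = r * ‖φ x‖ := by
        rw [hyx_def, real_inner_smul_right, real_inner_self_eq_norm_sq]
        field_simp
      rw [h1, EReal.coe_le_coe_iff, hc_def]
      have h2 := hImin x
      have h3 := ha_def ▸ hnormmin x
      have h4 : r * a ≤ r * ‖φ x‖ := mul_le_mul_of_nonneg_left h3 hr.le
      linarith only [h2, h4]
    exact le_trans hval (le_iSup
      (fun y : Metric.closedBall (0 : Y) r => ((I x + ⟪φ x, (y : Y)⟫ : ℝ) : EReal))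
      ⟨yx, hmem⟩)
end

section
/- Let X be a topological space, Y a real Hilbert space with inner product ⟨·,·⟩, T ⊆ Y a convex set dense in Y, and I : X → ℝ, φ : X → Y two functions such that, for each y ∈ T, the function x ↦ I(x) + ⟨φ(x), y⟩ is lower semicontinuous and inf-compact. Assume there exists a point x₀ ∈ X with φ(x₀) ≠ 0 such that x₀ is a global minimum of both the function I and the function x ↦ ‖φ(x)‖, and inf_{x ∈ X} ⟨φ(x), φ(x₀)⟩ < ‖φ(x₀)‖². Then, for every convex set S ⊆ T dense in Y, there exists r > 0 such that sup_{y ∈ B_r ∩ S} inf_{x ∈ X} (I(x) + ⟨φ(x), y⟩) < inf_{x ∈ X} sup_{y ∈ B_r ∩ S} (I(x) + ⟨φ(x), y⟩), where B_r = {y ∈ Y : ‖y‖ ≤ r} is the closed ball in Y centered at 0 of radius r. -/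
open scoped RealInnerProductSpace

lemma aux_dense_point {Y : Type*} [NormedAddCommGroup Y] [InnerProductSpace ℝ Y]
    {S : Set Y} (hS : Dense S) (z : Y) {r δ : ℝ} (hr : 0 < r) (hδ : 0 < δ) :
    ∃ y ∈ S, ‖y‖ ≤ r ∧ r * ‖z‖ - δ < ⟪z, y⟫ := by
  rcases eq_or_ne z 0 with hz | hz
  · obtain ⟨y, hyb, hyS⟩ := Metric.dense_iff.1 hS 0 r hr
    refine ⟨y, hyS, ?_, ?_⟩
    · have := Metric.mem_ball.1 hyb
      rw [dist_zero_right] at this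
      exact this.le
    · simp [hz]
      linarith
  · have hc : (0:ℝ) < ‖z‖ := norm_pos_iff.2 hz
    set c₀ := ‖z‖ with hc0
    set s := min (r/2) (δ/(4*c₀)) with hsdef
    have hs : 0 < s := lt_min (by linarith) (by positivity)
    have hs1 : s ≤ r/2 := min_le_left _ _
    have hs2 : s * (4*c₀) ≤ δ := by
      have h := min_le_right (r/2) (δ/(4*c₀))
      rw [← hsdef] at h
      exact (le_div_iff₀ (by positivity)).1 h
    set p := ((r - s)/c₀) • z with hpdef
    obtain ⟨y, hyb, hyS⟩ := Metric.dense_iff.1 hS p s hs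
    have hyp : ‖y - p‖ < s := by
      rw [← dist_eq_norm]; exact Metric.mem_ball.1 hyb
    have hrs : (0:ℝ) < r - s := by linarith
    have hpn : ‖p‖ = r - s := by
      rw [hpdef, norm_smul, Real.norm_eq_abs, abs_of_pos (by positivity), ← hc0]
      field_simp
    have hzp : ⟪z, p⟫ = (r - s) * c₀ := by
      rw [hpdef, real_inner_smul_right, real_inner_self_eq_norm_sq, ← hc0]
      field_simp
    have hyn : ‖y‖ ≤ r := by
      have h1 : ‖y‖ - ‖p‖ ≤ ‖y - p‖ := norm_sub_norm_le y p
      linarith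
    have hzy : -(c₀ * s) ≤ ⟪z, y - p⟫ := by
      have h1 : |⟪z, y - p⟫| ≤ ‖z‖ * ‖y - p‖ := abs_real_inner_le_norm z (y - p)
      have h2 : ‖z‖ * ‖y - p‖ ≤ c₀ * s := by
        rw [← hc0]
        exact mul_le_mul_of_nonneg_left hyp.le hc.le
      have := abs_le.1 (h1.trans h2)
      linarith [this.1]
    have hsum : ⟪z, y⟫ = ⟪z, p⟫ + ⟪z, y - p⟫ := by
      rw [← inner_add_right]
      norm_num
    refine ⟨y, hyS, hyn, ?_⟩
    rw [hsum, hzp]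
    nlinarith


/-- Under the hypotheses of Theorem 2.1, for every convex set `S ⊆ T` dense in `Y` there
is `r > 0` such that
`sup_{y ∈ B_r ∩ S} inf_{x ∈ X} (I x + ⟨φ x, y⟩) < inf_{x ∈ X} sup_{y ∈ B_r ∩ S} (I x + ⟨φ x, y⟩)`,
where `B_r` is the closed ball of radius `r` centered at `0` in `Y`. -/
theorem ricceri_strict_minimax_dense_subset {X : Type*} [TopologicalSpace X] {Y : Type*}
    [NormedAddCommGroup Y] [InnerProductSpace ℝ Y] [CompleteSpace Y]
    (T : Set Y) (hTconv : Convex ℝ T) (hTdense : Dense T)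
    (I : X → ℝ) (φ : X → Y)
    (hlsc : ∀ y ∈ T, LowerSemicontinuous (fun x : X => I x + ⟪φ x, y⟫))
    (hinfcpt : ∀ y ∈ T, ∀ r : ℝ, IsCompact {x : X | I x + ⟪φ x, y⟫ ≤ r})
    (x₀ : X) (hφx₀ : φ x₀ ≠ 0)
    (hImin : ∀ x : X, I x₀ ≤ I x)
    (hnormmin : ∀ x : X, ‖φ x₀‖ ≤ ‖φ x‖)
    (hb : ∃ x : X, ⟪φ x, φ x₀⟫ < ‖φ x₀‖ ^ 2) :
    ∀ S : Set Y, S ⊆ T → Convex ℝ S → Dense S →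
      ∃ r : ℝ, 0 < r ∧
        (⨆ y : ↥(Metric.closedBall (0 : Y) r ∩ S),
            ⨅ x : X, ((I x + ⟪φ x, (y : Y)⟫ : ℝ) : EReal)) <
          ⨅ x : X, ⨆ y : ↥(Metric.closedBall (0 : Y) r ∩ S),
            ((I x + ⟪φ x, (y : Y)⟫ : ℝ) : EReal) := by
  intro S hST hSconv hSdense
  obtain ⟨x₁, hx₁⟩ := hb
  have hu : (0:ℝ) < ‖φ x₀‖ := norm_pos_iff.2 hφx₀
  have hD : 0 < ‖φ x₀‖^2 - ⟪φ x₁, φ x₀⟫ := by linarith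
  have hba : 0 ≤ I x₁ - I x₀ := by linarith [hImin x₁]
  set r : ℝ := ((I x₁ - I x₀) * ‖φ x₀‖ + 1) / (‖φ x₀‖^2 - ⟪φ x₁, φ x₀⟫) with hrdef
  have hr : 0 < r := div_pos (by nlinarith) hD
  have hkey : r * (‖φ x₀‖^2 - ⟪φ x₁, φ x₀⟫) = (I x₁ - I x₀) * ‖φ x₀‖ + 1 := by
    rw [hrdef]; field_simp
  set w : Y := φ x₁ - φ x₀ with hwdef
  have hw : w ≠ 0 := by
    intro h
    have hv : φ x₁ = φ x₀ := by
      rwa [hwdef, sub_eq_zero] at h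
    rw [hv, real_inner_self_eq_norm_sq] at hx₁
    exact lt_irrefl _ hx₁
  have hw0 : (0:ℝ) < ‖w‖ := norm_pos_iff.2 hw
  set ε : ℝ := min 1 (1/(r*‖w‖^2)) with hεdef
  have hε0 : 0 < ε := lt_min one_pos (by positivity)
  have hε1 : ε ≤ 1 := min_le_left _ _
  have hε2 : ε * (r*‖w‖^2) ≤ 1 := by
    have h := min_le_right 1 (1/(r*‖w‖^2))
    rw [← hεdef] at h
    calc ε * (r*‖w‖^2) ≤ (1/(r*‖w‖^2)) * (r*‖w‖^2) :=
          mul_le_mul_of_nonneg_right h (by positivity)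
      _ = 1 := by field_simp
  have hiw : ⟪φ x₀, w⟫ = ⟪φ x₁, φ x₀⟫ - ‖φ x₀‖^2 := by
    rw [hwdef, inner_sub_right, real_inner_comm, real_inner_self_eq_norm_sq]
  have hkey2 : r * ⟪φ x₀, w⟫ = -((I x₁ - I x₀) * ‖φ x₀‖ + 1) := by
    rw [hiw]; nlinarith [hkey]
  -- the main strict inequality
  have hmain : ε*(I x₁ - I x₀) + r*‖φ x₀ + ε•w‖ < r*‖φ x₀‖ := by
    have hs2 : ‖φ x₀ + ε•w‖^2 = ‖φ x₀‖^2 + 2*(ε*⟪φ x₀, w⟫) + ε^2*‖w‖^2 := by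
      rw [norm_add_sq_real, real_inner_smul_right, norm_smul, Real.norm_eq_abs,
        abs_of_pos hε0]
      ring
    have h3 : ε * (r * ⟪φ x₀, w⟫) = -(ε * ((I x₁ - I x₀) * ‖φ x₀‖ + 1)) := by
      rw [hkey2]; ring
    have h4 : ε * (ε * (r*‖w‖^2)) ≤ ε * 1 := mul_le_mul_of_nonneg_left hε2 hε0.le
    nlinarith [norm_nonneg (φ x₀ + ε•w), mul_nonneg hr.le
        (sq_nonneg (‖φ x₀ + ε•w‖ - ‖φ x₀‖)), hu, hε0, hs2, h3, h4,
        mul_pos hr hu, sq_nonneg (‖φ x₀ + ε•w‖ - ‖φ x₀‖)]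
  -- per-y bound
  have hyb : ∀ y : Y, ‖y‖ ≤ r →
      min (I x₀ + ⟪φ x₀, y⟫) (I x₁ + ⟪φ x₁, y⟫)
        ≤ (1-ε)*(I x₀) + ε*(I x₁) + r*‖φ x₀ + ε•w‖ := by
    intro y hy
    have hCS : ⟪φ x₀ + ε•w, y⟫ ≤ ‖φ x₀ + ε•w‖*‖y‖ := real_inner_le_norm _ _
    have hlin : ⟪φ x₀ + ε•w, y⟫ = ⟪φ x₀, y⟫ + ε*(⟪φ x₁, y⟫ - ⟪φ x₀, y⟫) := by
      rw [inner_add_left, real_inner_smul_left, hwdef, inner_sub_left]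
    have hnn : ‖φ x₀ + ε•w‖*‖y‖ ≤ ‖φ x₀ + ε•w‖*r :=
      mul_le_mul_of_nonneg_left hy (norm_nonneg _)
    rcases le_total (I x₀ + ⟪φ x₀, y⟫) (I x₁ + ⟪φ x₁, y⟫) with h | h
    · rw [min_eq_left h]; nlinarith
    · rw [min_eq_right h]; nlinarith
  have hBne : (Metric.closedBall (0:Y) r ∩ S).Nonempty := by
    obtain ⟨y, hy1, hy2⟩ := Metric.dense_iff.1 hSdense 0 r hr
    exact ⟨y, Metric.ball_subset_closedBall hy1, hy2⟩
  refine ⟨r, hr, ?_⟩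
  have hsuple : (⨆ y : ↥(Metric.closedBall (0 : Y) r ∩ S),
      ⨅ x : X, ((I x + ⟪φ x, (y : Y)⟫ : ℝ) : EReal))
      ≤ (((1-ε)*(I x₀) + ε*(I x₁) + r*‖φ x₀ + ε•w‖ : ℝ) : EReal) := by
    refine iSup_le ?_
    rintro ⟨y, hyB, hyS⟩
    have hy : ‖y‖ ≤ r := by
      have := Metric.mem_closedBall.1 hyB
      rwa [dist_zero_right] at this
    have hmin := hyb y hy
    rcases le_total (I x₀ + ⟪φ x₀, y⟫) (I x₁ + ⟪φ x₁, y⟫) with h | h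
    · refine le_trans (iInf_le _ x₀) ?_
      refine EReal.coe_le_coe_iff.2 ?_
      rw [min_eq_left h] at hmin
      exact hmin
    · refine le_trans (iInf_le _ x₁) ?_
      refine EReal.coe_le_coe_iff.2 ?_
      rw [min_eq_right h] at hmin
      exact hmin
  have hc : (((1-ε)*(I x₀) + ε*(I x₁) + r*‖φ x₀ + ε•w‖ : ℝ) : EReal)
      < ((I x₀ + r*‖φ x₀‖ : ℝ) : EReal) := by
    refine EReal.coe_lt_coe_iff.2 ?_
    nlinarith [hmain]
  have hinfge : ((I x₀ + r*‖φ x₀‖ : ℝ) : EReal)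
      ≤ ⨅ x : X, ⨆ y : ↥(Metric.closedBall (0 : Y) r ∩ S),
          ((I x + ⟪φ x, (y : Y)⟫ : ℝ) : EReal) := by
    refine le_iInf fun x => ?_
    have hax : I x₀ + r*‖φ x₀‖ ≤ I x + r*‖φ x‖ := by
      have h1 := hImin x
      have h2 : r*‖φ x₀‖ ≤ r*‖φ x‖ := mul_le_mul_of_nonneg_left (hnormmin x) hr.le
      linarith
    refine le_trans (EReal.coe_le_coe_iff.2 hax) ?_
    rw [le_iSup_iff]
    intro b hb'
    induction b using EReal.rec with
    | bot =>
        exfalso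
        obtain ⟨y, hy⟩ := hBne
        have := hb' ⟨y, hy⟩
        simp at this
    | coe t =>
        refine EReal.coe_le_coe_iff.2 ?_
        refine le_of_forall_pos_le_add ?_
        intro δ hδ
        obtain ⟨y, hyS, hyr, hyi⟩ := aux_dense_point hSdense (φ x) hr hδ
        have hmem : y ∈ Metric.closedBall (0:Y) r ∩ S := by
          constructor
          · rw [Metric.mem_closedBall, dist_zero_right]; exact hyr
          · exact hyS
        have h2 : I x + ⟪φ x, y⟫ ≤ t := EReal.coe_le_coe_iff.1 (hb' ⟨y, hmem⟩)
        linarith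
    | top => exact le_top
  exact lt_of_le_of_lt hsuple (lt_of_lt_of_le hc hinfge)
end
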